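/- Let R(θ,t) be μ-strongly convex in θ with time-varying minimizer θ*(t) that is L-Lipschitz in t. Consider gradient descent iterates θ̂_{(k+1)h} = θ̂_{kh} − η∇_θR(θ̂_{kh}, kh) with time step h > 0 and learning rate 0 < η < 1/M, where the operator norm of I − η∇_{θθ}R(θ,t) is bounded by 1 − ηM for all θ,t. Then limsup_{k→∞} ‖θ̂_{kh} − θ*(kh)‖ ≤ Lh/(ηM). -/

import Mathlib

open Filter

/-- Gradient descent for time-varying optimization: ATE upper bound. -/
theorem stmt_0 {d : ℕ}
    (R : EuclideanSpace ℝ (Fin d) → ℝ → ℝ)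
    (gradR : EuclideanSpace ℝ (Fin d) → ℝ → EuclideanSpace ℝ (Fin d))
    (θstar : ℝ → EuclideanSpace ℝ (Fin d))
    (h η M L μ : ℝ) (hh : 0 < h) (hη : 0 < η) (hM : 0 < M) (hηM : η < 1 / M)
    (hμ : 0 < μ)
    -- μ-strong convexity of R in θ
    (hconv : ∀ θ₁ θ₂ : EuclideanSpace ℝ (Fin d), ∀ t : ℝ, 0 ≤ t →
      R θ₂ t ≥ R θ₁ t + inner ℝ (gradR θ₁ t) (θ₂ - θ₁) + μ / 2 * ‖θ₂ - θ₁‖ ^ 2)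
    -- θ*(t) is the minimizer: first-order optimality
    (hopt : ∀ t : ℝ, 0 ≤ t → gradR (θstar t) t = 0)
    -- θ* is L-Lipschitz in t
    (hLip : ∀ s t : ℝ, ‖θstar t - θstar s‖ ≤ L * |t - s|)
    -- operator-norm bound ‖I - η ∇θθ R‖ ≤ 1 - ηM, stated via the mean-value consequence
    (hcontr : ∀ x y : EuclideanSpace ℝ (Fin d), ∀ t : ℝ, 0 ≤ t →
      ‖(x - η • gradR x t) - (y - η • gradR y t)‖ ≤ (1 - η * M) * ‖x - y‖)
    (θhat : ℕ → EuclideanSpace ℝ (Fin d))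
    (hupd : ∀ k : ℕ, θhat (k + 1) = θhat k - η • gradR (θhat k) (k * h)) :
    limsup (fun k : ℕ => ‖θhat k - θstar (k * h)‖) atTop ≤ L * h / (η * M) := by
  set e : ℕ → ℝ := fun k => ‖θhat k - θstar (k * h)‖ with he
  set q : ℝ := 1 - η * M with hq
  have hηM1 : η * M < 1 := by
    have := (lt_div_iff₀ hM).mp hηM
    linarith
  have hq0 : 0 ≤ q := by simp [hq]; linarith
  have hq1 : q < 1 := by simp [hq]; positivity
  have hL0 : 0 ≤ L := by
    have := hLip 0 1
    have h0 : (0:ℝ) ≤ ‖θstar 1 - θstar 0‖ := norm_nonneg _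
    simp at this
    linarith
  set B : ℝ := L * h / (η * M) with hB
  have hB0 : 0 ≤ B := by positivity
  have key : ∀ k : ℕ, e (k + 1) ≤ q * e k + L * h := by
    intro k
    have ht : (0:ℝ) ≤ (k : ℝ) * h := by positivity
    have h1 : ‖θhat (k + 1) - θstar (k * h)‖ ≤ q * e k := by
      have := hcontr (θhat k) (θstar ((k:ℝ) * h)) ((k:ℝ) * h) ht
      rw [hopt _ ht] at this
      simpa [hupd k, he, hq] using this
    have h2 : ‖θstar ((k:ℝ) * h) - θstar (((k:ℝ) + 1) * h)‖ ≤ L * h := by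
      have := hLip (((k:ℝ) + 1) * h) ((k:ℝ) * h)
      have habs : |(k:ℝ) * h - ((k:ℝ) + 1) * h| = h := by
        rw [abs_of_nonpos (by nlinarith)]; ring
      rw [habs] at this
      exact this
    calc e (k + 1) = ‖(θhat (k + 1) - θstar ((k:ℝ) * h)) +
          (θstar ((k:ℝ) * h) - θstar (((k:ℝ) + 1) * h))‖ := by
          simp only [he]
          push_cast
          congr 1
          abel
      _ ≤ ‖θhat (k + 1) - θstar ((k:ℝ) * h)‖ +
          ‖θstar ((k:ℝ) * h) - θstar (((k:ℝ) + 1) * h)‖ := norm_add_le _ _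
      _ ≤ q * e k + L * h := add_le_add h1 h2
  have hLhB : q * B + L * h = B := by
    have hne : η * M ≠ 0 := by positivity
    rw [hB, hq]
    field_simp
    ring
  have ind : ∀ k : ℕ, e k ≤ q ^ k * e 0 + B := by
    intro k
    induction k with
    | zero => simp [hB0]
    | succ n ih =>
      calc e (n + 1) ≤ q * e n + L * h := key n
        _ ≤ q * (q ^ n * e 0 + B) + L * h := by nlinarith [mul_le_mul_of_nonneg_left ih hq0]
        _ = q ^ (n + 1) * e 0 + (q * B + L * h) := by ring
        _ = q ^ (n + 1) * e 0 + B := by rw [hLhB]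
  have htend : Tendsto (fun k : ℕ => q ^ k * e 0 + B) atTop (nhds (0 * e 0 + B)) := by
    exact Tendsto.add (Tendsto.mul_const _ (tendsto_pow_atTop_nhds_zero_of_lt_one hq0 hq1))
      tendsto_const_nhds
  have hlimf : limsup (fun k : ℕ => q ^ k * e 0 + B) atTop = B := by
    rw [htend.limsup_eq]; ring
  calc limsup e atTop ≤ limsup (fun k : ℕ => q ^ k * e 0 + B) atTop := by
        exact limsup_le_limsup (Eventually.of_forall ind)
          (isCoboundedUnder_le_of_le atTop (fun k => norm_nonneg _))
          htend.isBoundedUnder_le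
    _ = B := hlimf
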